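/- Extrapolation effect of ∇Ω ∘ ∇Ω*: assume the kernel matrix K = (exp(−c_{ij}/2))_{i,j} is positive definite. For every f ∈ ℝ^d, the symmetric Sinkhorn potential of g-softmax(f) equals the extrapolation of f shifted down by Ω_C^*(f): ∇Ω(g-softmax(f)) = f^E − Ω_C^*(f)·1. -/

import Mathlib

open Finset Real Filter

noncomputable section

/-- The probability simplex in `ℝ^d`. -/
def simplexS (d : ℕ) : Set (Fin d → ℝ) := stdSimplex ℝ (Fin d)


open scoped Classical

/-- `Φ_C(α,f) = Σ_{i,j} α_i α_j exp(-(f_i + f_j + c_{ij})/2)`. -/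
def Phi {d : ℕ} (C : Matrix (Fin d) (Fin d) ℝ) (α f : Fin d → ℝ) : ℝ :=
  ∑ i, ∑ j, α i * α j * Real.exp (-(f i + f j + C i j) / 2)

/-- The geometric log-sum-exp `Ω_C^*(f) = -log min_{α ∈ △^d} Φ_C(α, f)`. -/
def OmegaStar {d : ℕ} (C : Matrix (Fin d) (Fin d) ℝ) (f : Fin d → ℝ) : ℝ :=
  -Real.log (sInf ((fun α => Phi C α f) '' simplexS d))

/-- The geometric softmax: the (unique, when the kernel is positive definite) minimizer of
`Φ_C(·, f)` over the simplex. -/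
def gsoftmax {d : ℕ} (C : Matrix (Fin d) (Fin d) ℝ) (f : Fin d → ℝ) : Fin d → ℝ :=
  if h : ∃ α ∈ simplexS d, IsMinOn (fun β => Phi C β f) (simplexS d) α
  then h.choose else fun _ => 0

/-- The soft C-transform `T(f,α)_i = -2 log Σ_j α_j exp((f_j - c_{ij})/2)`. -/
def Tsoft {d : ℕ} (C : Matrix (Fin d) (Fin d) ℝ) (f α : Fin d → ℝ) : Fin d → ℝ :=
  fun i => -2 * Real.log (∑ j, α j * Real.exp ((f j - C i j) / 2))

/-- `f` is the symmetric Sinkhorn potential of `α`: `-f = T(-f, α)`. -/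
def IsSinkhornPotential {d : ℕ} (C : Matrix (Fin d) (Fin d) ℝ) (α f : Fin d → ℝ) : Prop :=
  -f = Tsoft C (-f) α

/-- The symmetric Sinkhorn potential `∇Ω(α)`: the (unique, when the kernel is positive
definite) `f` with `-f = T(-f, α)`. -/
def gradOmega {d : ℕ} (C : Matrix (Fin d) (Fin d) ℝ) (α : Fin d → ℝ) : Fin d → ℝ :=
  if h : ∃ f : Fin d → ℝ, IsSinkhornPotential C α f then h.choose else fun _ => 0

/-- The extrapolation `f^E = -T(-(f - Ω_C^*(f)·1), g-softmax(f)) + Ω_C^*(f)·1`. -/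
def extrap {d : ℕ} (C : Matrix (Fin d) (Fin d) ℝ) (f : Fin d → ℝ) : Fin d → ℝ :=
  fun i => -(Tsoft C (fun j => -(f j - OmegaStar C f)) (gsoftmax C f) i) + OmegaStar C f

/-- The kernel matrix `K = (exp(-c_{ij}/2))_{ij}`. -/
def kernelK {d : ℕ} (C : Matrix (Fin d) (Fin d) ℝ) : Matrix (Fin d) (Fin d) ℝ :=
  Matrix.of fun i j => Real.exp (-(C i j) / 2)

namespace SinkAux

variable {d : ℕ}

/-- The summand kernel `E i j = exp(-(f i + f j + C i j)/2)`. -/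
def Ee (C : Matrix (Fin d) (Fin d) ℝ) (f : Fin d → ℝ) (i j : Fin d) : ℝ :=
  Real.exp (-(f i + f j + C i j) / 2)

lemma Ee_pos (C : Matrix (Fin d) (Fin d) ℝ) (f : Fin d → ℝ) (i j : Fin d) : 0 < Ee C f i j :=
  Real.exp_pos _

lemma Ee_symm (C : Matrix (Fin d) (Fin d) ℝ) (hC : C.IsSymm) (f : Fin d → ℝ) (i j : Fin d) :
    Ee C f i j = Ee C f j i := by
  unfold Ee
  rw [← hC.apply i j]
  ring_nf

lemma Phi_eq (C : Matrix (Fin d) (Fin d) ℝ) (α f : Fin d → ℝ) :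
    Phi C α f = ∑ i, ∑ j, α i * α j * Ee C f i j := rfl

/-- `G r = Σ_i α_i E_{i r}`. -/
def Gg (C : Matrix (Fin d) (Fin d) ℝ) (f α : Fin d → ℝ) (r : Fin d) : ℝ :=
  ∑ i, α i * Ee C f i r

lemma exists_pos_of_sum_one (α : Fin d → ℝ) (hsum : ∑ i, α i = 1) : ∃ i, 0 < α i := by
  by_contra h
  push_neg at h
  have : ∑ i, α i ≤ 0 := Finset.sum_nonpos (fun i _ => h i)
  linarith

lemma sum_mul_pos (α h : Fin d → ℝ) (hα0 : ∀ i, 0 ≤ α i) (hpos : ∃ i, 0 < α i)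
    (hh : ∀ j, 0 < h j) : 0 < ∑ j, α j * h j := by
  obtain ⟨j0, hj0⟩ := hpos
  exact Finset.sum_pos' (fun j _ => mul_nonneg (hα0 j) (hh j).le)
    ⟨j0, Finset.mem_univ _, mul_pos hj0 (hh j0)⟩

/-- Fixed-point characterization of the symmetric Sinkhorn potential. -/
lemma sinkhorn_iff (C : Matrix (Fin d) (Fin d) ℝ) (α : Fin d → ℝ)
    (hα0 : ∀ i, 0 ≤ α i) (hpos : ∃ i, 0 < α i) (g : Fin d → ℝ) :
    IsSinkhornPotential C α g ↔
      ∀ i, Real.exp (g i / 2) =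
        ∑ j, α j * (Real.exp (-(C i j) / 2) / Real.exp (g j / 2)) := by
  have hterm : ∀ i j : Fin d, Real.exp ((-g j - C i j) / 2)
      = Real.exp (-(C i j) / 2) / Real.exp (g j / 2) := by
    intro i j
    rw [show (-g j - C i j) / 2 = -(C i j) / 2 - g j / 2 by ring, Real.exp_sub]
  have hSpos : ∀ i, 0 < ∑ j, α j * Real.exp ((-g j - C i j) / 2) := by
    intro i
    exact sum_mul_pos α _ hα0 hpos (fun j => Real.exp_pos _)
  constructor
  · intro hsp i
    have hi := congrFun hsp i
    simp only [Pi.neg_apply, Tsoft] at hi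
    -- hi : -g i = -2 * log (∑ j, α j * exp ((-g j - C i j)/2))
    have hgi : g i / 2 = Real.log (∑ j, α j * Real.exp ((-g j - C i j) / 2)) := by
      linarith [hi]
    rw [hgi, Real.exp_log (hSpos i)]
    exact Finset.sum_congr rfl fun j _ => by rw [hterm]
  · intro h
    funext i
    simp only [Pi.neg_apply, Tsoft]
    have h2 : ∑ j, α j * Real.exp ((-g j - C i j) / 2)
        = ∑ j, α j * (Real.exp (-(C i j) / 2) / Real.exp (g j / 2)) :=
      Finset.sum_congr rfl fun j _ => by rw [hterm]
    rw [h2, ← h i, Real.log_exp]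
    ring

/-- Uniqueness of the symmetric Sinkhorn potential. -/
lemma sinkhorn_unique (C : Matrix (Fin d) (Fin d) ℝ) (hd : 0 < d) (α : Fin d → ℝ)
    (hα0 : ∀ i, 0 ≤ α i) (hsum : ∑ i, α i = 1) (g₁ g₂ : Fin d → ℝ)
    (h1 : IsSinkhornPotential C α g₁) (h2 : IsSinkhornPotential C α g₂) : g₁ = g₂ := by
  haveI : Nonempty (Fin d) := ⟨⟨0, hd⟩⟩
  have hpos := exists_pos_of_sum_one α hsum
  set u : Fin d → ℝ := fun i => Real.exp (g₁ i / 2) with hu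
  set w : Fin d → ℝ := fun i => Real.exp (g₂ i / 2) with hw
  have hupos : ∀ i, 0 < u i := fun i => Real.exp_pos _
  have hwpos : ∀ i, 0 < w i := fun i => Real.exp_pos _
  have hufp : ∀ i, u i = ∑ j, α j * (Real.exp (-(C i j) / 2) / u j) :=
    (sinkhorn_iff C α hα0 hpos g₁).mp h1
  have hwfp : ∀ i, w i = ∑ j, α j * (Real.exp (-(C i j) / 2) / w j) :=
    (sinkhorn_iff C α hα0 hpos g₂).mp h2
  -- key comparison step, for arbitrary pair of fixed points
  have key : ∀ (u w : Fin d → ℝ), (∀ i, 0 < u i) → (∀ i, 0 < w i) →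
      (∀ i, u i = ∑ j, α j * (Real.exp (-(C i j) / 2) / u j)) →
      (∀ i, w i = ∑ j, α j * (Real.exp (-(C i j) / 2) / w j)) →
      ∀ (c : ℝ), 0 < c → (∀ j, c * w j ≤ u j) →
      ∀ i, u i ≤ w i / c ∧
        (u i = w i / c → ∀ j, 0 < α j → u j = c * w j) := by
    intro u w hupos hwpos hufp hwfp c hc hcw i
    have hle : ∀ j ∈ Finset.univ, α j * (Real.exp (-(C i j) / 2) / u j)
        ≤ α j * (Real.exp (-(C i j) / 2) / (c * w j)) := by
      intro j _
      apply mul_le_mul_of_nonneg_left _ (hα0 j)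
      apply div_le_div_of_nonneg_left (Real.exp_pos _).le (mul_pos hc (hwpos j)) (hcw j)
    have hsum2 : ∑ j, α j * (Real.exp (-(C i j) / 2) / (c * w j)) = w i / c := by
      rw [hwfp i, Finset.sum_div]
      exact (Finset.sum_congr rfl fun j _ => by ring).symm
    constructor
    · calc u i = ∑ j, α j * (Real.exp (-(C i j) / 2) / u j) := hufp i
        _ ≤ ∑ j, α j * (Real.exp (-(C i j) / 2) / (c * w j)) := Finset.sum_le_sum hle
        _ = w i / c := hsum2
    · intro heq j hj
      have hsums : ∑ j, α j * (Real.exp (-(C i j) / 2) / u j)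
          = ∑ j, α j * (Real.exp (-(C i j) / 2) / (c * w j)) := by
        rw [← hufp i, heq, hsum2]
      have hjeq := (Finset.sum_eq_sum_iff_of_le hle).mp hsums j (Finset.mem_univ j)
      have h3 : Real.exp (-(C i j) / 2) / u j = Real.exp (-(C i j) / 2) / (c * w j) :=
        mul_left_cancel₀ hj.ne' hjeq
      rw [div_eq_div_iff (hupos j).ne' (mul_pos hc (hwpos j)).ne'] at h3
      exact (mul_left_cancel₀ (Real.exp_pos (-(C i j) / 2)).ne' h3).symm
  -- extremal ratios
  obtain ⟨i₀, -, hmax⟩ := Finset.exists_max_image Finset.univ (fun i => u i / w i) Finset.univ_nonempty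
  obtain ⟨i₁, -, hmin⟩ := Finset.exists_min_image Finset.univ (fun i => u i / w i) Finset.univ_nonempty
  set ρ := u i₀ / w i₀ with hρ
  set μ := u i₁ / w i₁ with hμ
  have hρpos : 0 < ρ := div_pos (hupos i₀) (hwpos i₀)
  have hμpos : 0 < μ := div_pos (hupos i₁) (hwpos i₁)
  have hmax' : ∀ j, u j ≤ ρ * w j := fun j => (div_le_iff₀ (hwpos j)).mp (hmax j (Finset.mem_univ j))
  have hmin' : ∀ j, μ * w j ≤ u j := fun j => (le_div_iff₀ (hwpos j)).mp (hmin j (Finset.mem_univ j))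
  have e₀ : u i₀ = ρ * w i₀ := by
    rw [hρ, div_mul_cancel₀ _ (hwpos i₀).ne']
  have e₁ : u i₁ = μ * w i₁ := by
    rw [hμ, div_mul_cancel₀ _ (hwpos i₁).ne']
  have hinv : ∀ j, (1 / ρ) * u j ≤ w j := by
    intro j
    have := hmax' j
    rw [div_mul_eq_mul_div, div_le_iff₀ hρpos]
    linarith [this]
  have keyuw := key u w hupos hwpos hufp hwfp μ hμpos hmin'
  have keywu := key w u hwpos hupos hwfp hufp (1 / ρ) (by positivity) hinv
  have hud₀ : u i₀ ≤ w i₀ / μ := (keyuw i₀).1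
  have h₁ : ρ * μ ≤ 1 := by
    rw [e₀, le_div_iff₀ hμpos] at hud₀
    nlinarith [hwpos i₀]
  have hwd₁ : w i₁ ≤ u i₁ / (1 / ρ) := (keywu i₁).1
  have h₂ : 1 ≤ ρ * μ := by
    rw [div_div_eq_mul_div, div_one] at hwd₁
    rw [e₁] at hwd₁
    nlinarith [hwpos i₁]
  have hρμ : ρ * μ = 1 := le_antisymm h₁ h₂
  -- equality cases
  have heq₀ : u i₀ = w i₀ / μ := by
    rw [e₀, eq_div_iff hμpos.ne']
    calc ρ * w i₀ * μ = ρ * μ * w i₀ := by ring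
      _ = w i₀ := by rw [hρμ, one_mul]
  have heq₁ : w i₁ = u i₁ / (1 / ρ) := by
    rw [div_div_eq_mul_div, div_one, e₁]
    calc w i₁ = ρ * μ * w i₁ := by rw [hρμ, one_mul]
      _ = μ * w i₁ * ρ := by ring
  have hsupp1 : ∀ j, 0 < α j → u j = μ * w j := (keyuw i₀).2 heq₀
  have hsupp2 : ∀ j, 0 < α j → w j = (1 / ρ) * u j := (keywu i₁).2 heq₁
  obtain ⟨j₀, hj₀⟩ := hpos
  have hμρ : μ = ρ := by
    have ha := hsupp1 j₀ hj₀
    have hb := hsupp2 j₀ hj₀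
    rw [ha] at hb
    have h5 : ρ * w j₀ = μ * w j₀ := by
      calc ρ * w j₀ = ρ * ((1 / ρ) * (μ * w j₀)) := by rw [← hb]
        _ = μ * w j₀ := by field_simp
    exact mul_right_cancel₀ (hwpos j₀).ne' h5.symm
  have hρ1 : ρ = 1 := by nlinarith
  have hμ1 : μ = 1 := by nlinarith
  funext i
  have huw : u i = w i := le_antisymm (by have := hmax' i; rw [hρ1] at this; linarith)
    (by have := hmin' i; rw [hμ1] at this; linarith)
  have : g₁ i / 2 = g₂ i / 2 := Real.exp_injective huw
  linarith

lemma nonneg_of_small (L R a : ℝ) (ha : 0 < a)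
    (h : ∀ t : ℝ, 0 < t → t ≤ a → 0 ≤ 2 * t * L + t ^ 2 * R) : 0 ≤ L := by
  by_contra hL
  push_neg at hL
  set t := min a (-L / (|R| + 1)) with ht
  have hR1 : 0 < |R| + 1 := by positivity
  have htpos : 0 < t := lt_min ha (div_pos (by linarith) hR1)
  have hta : t ≤ a := min_le_left _ _
  have h2 := h t htpos hta
  have htR : t * |R| < -L := by
    have h3 : t ≤ -L / (|R| + 1) := min_le_right _ _
    have h4 : t * (|R| + 1) ≤ -L := by
      rw [← le_div_iff₀ hR1]; exact h3
    nlinarith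
  have h5 : t * R ≤ t * |R| := mul_le_mul_of_nonneg_left (le_abs_self R) htpos.le
  have h6 : 0 ≤ t * (2 * L + t * R) := by nlinarith
  have h7 : 0 ≤ 2 * L + t * R := (mul_nonneg_iff_of_pos_left htpos).mp h6
  linarith

lemma kkt_le (C : Matrix (Fin d) (Fin d) ℝ) (hC : C.IsSymm) (f α : Fin d → ℝ)
    (hα0 : ∀ i, 0 ≤ α i) (hsum : ∑ i, α i = 1)
    (hmin : IsMinOn (fun β => Phi C β f) (stdSimplex ℝ (Fin d)) α)
    (p : Fin d) (hp : 0 < α p) (q : Fin d) :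
    Gg C f α p ≤ Gg C f α q := by
  rcases eq_or_ne p q with rfl | hpq
  · exact le_refl _
  set v : Fin d → ℝ := fun r => (if r = q then (1:ℝ) else 0) - (if r = p then 1 else 0) with hv
  have collapse : ∀ X : Fin d → ℝ, ∑ r, v r * X r = X q - X p := by
    intro X
    simp only [hv, sub_mul, ite_mul, one_mul, zero_mul]
    rw [Finset.sum_sub_distrib, Finset.sum_ite_eq', Finset.sum_ite_eq']
    simp
  have hvsum : ∑ r, v r = 0 := by
    have h := collapse (fun _ => 1)
    simp only [mul_one] at h
    simp [h]
  have hmem : ∀ t : ℝ, 0 ≤ t → t ≤ α p → (fun r => α r + t * v r) ∈ stdSimplex ℝ (Fin d) := by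
    intro t ht hta
    refine ⟨fun r => ?_, ?_⟩
    · show 0 ≤ α r + t * v r
      by_cases hrp : r = p
      · subst hrp
        have hvr : v r = -1 := by simp [hv, hpq]
        rw [hvr]; linarith
      · by_cases hrq : r = q
        · subst hrq
          have hvr : v r = 1 := by simp [hv, Ne.symm hpq]
          rw [hvr]
          have := hα0 r; linarith
        · have hvr : v r = 0 := by simp [hv, hrp, hrq]
          rw [hvr]
          have := hα0 r; linarith
    · show ∑ r, (α r + t * v r) = 1
      rw [Finset.sum_add_distrib, hsum, ← Finset.mul_sum, hvsum, mul_zero, add_zero]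
  have hA : ∑ i, ∑ j, v i * (α j * Ee C f i j) = Gg C f α q - Gg C f α p := by
    have h1 : ∀ i, ∑ j, v i * (α j * Ee C f i j) = v i * (∑ j, α j * Ee C f i j) :=
      fun i => (Finset.mul_sum _ _ _).symm
    rw [Finset.sum_congr rfl fun i _ => h1 i, collapse (fun i => ∑ j, α j * Ee C f i j)]
    unfold Gg
    congr 1
    · exact Finset.sum_congr rfl fun j _ => by rw [Ee_symm C hC]
    · exact Finset.sum_congr rfl fun j _ => by rw [Ee_symm C hC]
  have hB : ∑ i, ∑ j, α i * (v j * Ee C f i j) = Gg C f α q - Gg C f α p := by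
    have h1 : ∀ i, ∑ j, α i * (v j * Ee C f i j) = α i * (Ee C f i q - Ee C f i p) := by
      intro i
      rw [← Finset.mul_sum, collapse (fun j => Ee C f i j)]
    rw [Finset.sum_congr rfl fun i _ => h1 i]
    unfold Gg
    rw [← Finset.sum_sub_distrib]
    exact Finset.sum_congr rfl fun i _ => by ring
  have hexp : ∀ t : ℝ, Phi C (fun r => α r + t * v r) f
      = Phi C α f + 2 * t * (Gg C f α q - Gg C f α p)
        + t ^ 2 * (∑ i, ∑ j, v i * v j * Ee C f i j) := by
    intro t
    rw [Phi_eq, Phi_eq]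
    calc ∑ i, ∑ j, (α i + t * v i) * (α j + t * v j) * Ee C f i j
        = ∑ i, ∑ j, (α i * α j * Ee C f i j + t * (v i * (α j * Ee C f i j))
          + t * (α i * (v j * Ee C f i j)) + t ^ 2 * (v i * v j * Ee C f i j)) :=
          Finset.sum_congr rfl fun i _ => Finset.sum_congr rfl fun j _ => by ring
      _ = (∑ i, ∑ j, α i * α j * Ee C f i j) + (∑ i, ∑ j, t * (v i * (α j * Ee C f i j)))
          + (∑ i, ∑ j, t * (α i * (v j * Ee C f i j)))
          + ∑ i, ∑ j, t ^ 2 * (v i * v j * Ee C f i j) := by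
          simp only [Finset.sum_add_distrib]
      _ = (∑ i, ∑ j, α i * α j * Ee C f i j) + t * (∑ i, ∑ j, v i * (α j * Ee C f i j))
          + t * (∑ i, ∑ j, α i * (v j * Ee C f i j))
          + t ^ 2 * ∑ i, ∑ j, v i * v j * Ee C f i j := by
          simp only [← Finset.mul_sum]
      _ = _ := by rw [hA, hB]; ring
  have hL : 0 ≤ Gg C f α q - Gg C f α p := by
    apply nonneg_of_small _ (∑ i, ∑ j, v i * v j * Ee C f i j) (α p) hp
    intro t ht hta
    have hmem' := hmem t ht.le hta
    have := isMinOn_iff.mp hmin _ hmem'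
    rw [hexp t] at this
    linarith
  linarith

lemma Gg_eq (C : Matrix (Fin d) (Fin d) ℝ) (hC : C.IsSymm) (f α : Fin d → ℝ)
    (hα0 : ∀ i, 0 ≤ α i) (hsum : ∑ i, α i = 1)
    (hmin : IsMinOn (fun β => Phi C β f) (stdSimplex ℝ (Fin d)) α)
    (p : Fin d) (hp : 0 < α p) : Gg C f α p = Phi C α f := by
  have havg : ∑ k, α k * Gg C f α k = Phi C α f := by
    rw [Phi_eq]
    unfold Gg
    simp_rw [Finset.mul_sum]
    rw [Finset.sum_comm]
    exact Finset.sum_congr rfl fun i _ => Finset.sum_congr rfl fun k _ => by ring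
  have hub : Gg C f α p ≤ Phi C α f := by
    rw [← havg]
    calc Gg C f α p = ∑ k, α k * Gg C f α p := by rw [← Finset.sum_mul, hsum, one_mul]
      _ ≤ ∑ k, α k * Gg C f α k :=
        Finset.sum_le_sum fun k _ =>
          mul_le_mul_of_nonneg_left (kkt_le C hC f α hα0 hsum hmin p hp k) (hα0 k)
  have hlb : Phi C α f ≤ Gg C f α p := by
    rw [← havg]
    calc ∑ k, α k * Gg C f α k ≤ ∑ k, α k * Gg C f α p := by
          apply Finset.sum_le_sum
          intro k _
          rcases (hα0 k).eq_or_lt with h | h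
          · rw [← h]; simp
          · exact mul_le_mul_of_nonneg_left (kkt_le C hC f α hα0 hsum hmin k h p) (hα0 k)
      _ = Gg C f α p := by rw [← Finset.sum_mul, hsum, one_mul]
  linarith

end SinkAux

/-- Extrapolation effect of `∇Ω ∘ ∇Ω^*`: for every `f ∈ ℝ^d`,
`∇Ω(g-softmax(f)) = f^E - Ω_C^*(f)·1`. -/
theorem gradOmega_gsoftmax_extrapolation (d : ℕ) (hd : 1 ≤ d)
    (C : Matrix (Fin d) (Fin d) ℝ) (hCsym : C.IsSymm) (hCdiag : ∀ i, C i i = 0)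
    (hK : (kernelK C).PosDef) (f : Fin d → ℝ) :
    gradOmega C (gsoftmax C f) = fun i => extrap C f i - OmegaStar C f := by
  classical
  haveI : Nonempty (Fin d) := ⟨⟨0, hd⟩⟩
  have hcont : ContinuousOn (fun β => Phi C β f) (simplexS d) := by
    apply Continuous.continuousOn
    unfold Phi
    exact continuous_finset_sum _ fun i _ => continuous_finset_sum _ fun j _ =>
      (((continuous_apply i).mul (continuous_apply j)).mul continuous_const)
  have hne : (simplexS d).Nonempty := by
    refine ⟨fun r => if r = ⟨0, hd⟩ then 1 else 0, fun r => ?_, ?_⟩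
    · dsimp only; split <;> norm_num
    · rw [Finset.sum_ite_eq' Finset.univ (⟨0, hd⟩ : Fin d) (fun _ => (1:ℝ))]
      simp
  have hex : ∃ α ∈ simplexS d, IsMinOn (fun β => Phi C β f) (simplexS d) α :=
    (isCompact_stdSimplex ℝ (Fin d)).exists_isMinOn hne hcont
  set α := gsoftmax C f with hα
  have hαspec : α ∈ simplexS d ∧ IsMinOn (fun β => Phi C β f) (simplexS d) α := by
    rw [hα, gsoftmax, dif_pos hex]
    exact ⟨hex.choose_spec.1, hex.choose_spec.2⟩
  obtain ⟨hmem, hmin⟩ := hαspec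
  have hα0 : ∀ i, 0 ≤ α i := hmem.1
  have hsum : ∑ i, α i = 1 := hmem.2
  have hpos : ∃ i, 0 < α i := SinkAux.exists_pos_of_sum_one α hsum
  set m := Phi C α f with hm
  have hmpos : 0 < m := by
    obtain ⟨j0, hj0⟩ := hpos
    rw [hm, SinkAux.Phi_eq]
    refine Finset.sum_pos' (fun i _ => Finset.sum_nonneg fun j _ =>
      mul_nonneg (mul_nonneg (hα0 i) (hα0 j)) (SinkAux.Ee_pos C f i j).le)
      ⟨j0, Finset.mem_univ _, ?_⟩
    exact Finset.sum_pos' (fun j _ =>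
      mul_nonneg (mul_nonneg (hα0 j0) (hα0 j)) (SinkAux.Ee_pos C f j0 j).le)
      ⟨j0, Finset.mem_univ _, mul_pos (mul_pos hj0 hj0) (SinkAux.Ee_pos C f j0 j0)⟩
  have hΩeq : OmegaStar C f = -Real.log m := by
    unfold OmegaStar
    have : sInf ((fun β => Phi C β f) '' simplexS d) = m := by
      apply IsLeast.csInf_eq
      constructor
      · exact ⟨α, hmem, rfl⟩
      · rintro y ⟨β, hβ, rfl⟩
        exact isMinOn_iff.mp hmin β hβ
    rw [this]
  set Ω := OmegaStar C f with hΩdef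
  set g : Fin d → ℝ := fun i => extrap C f i - Ω with hg
  have hgi : ∀ i, g i = 2 * Real.log (∑ j, α j * Real.exp ((-(f j - Ω) - C i j) / 2)) := by
    intro i
    rw [hg]
    show extrap C f i - Ω = _
    unfold extrap Tsoft
    rw [← hα, ← hΩdef]
    ring
  have hSpos : ∀ i, 0 < ∑ j, α j * Real.exp ((-(f j - Ω) - C i j) / 2) := fun i =>
    SinkAux.sum_mul_pos α _ hα0 hpos fun j => Real.exp_pos _
  have hexpg : ∀ i, Real.exp (g i / 2) = ∑ j, α j * Real.exp ((-(f j - Ω) - C i j) / 2) := by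
    intro i
    rw [hgi i, show 2 * Real.log (∑ j, α j * Real.exp ((-(f j - Ω) - C i j) / 2)) / 2
      = Real.log (∑ j, α j * Real.exp ((-(f j - Ω) - C i j) / 2)) by ring]
    exact Real.exp_log (hSpos i)
  have hGsupp : ∀ j, 0 < α j → SinkAux.Gg C f α j = m :=
    fun j hj => SinkAux.Gg_eq C hCsym f α hα0 hsum hmin j hj
  have hSj : ∀ j, 0 < α j → Real.exp (g j / 2) = Real.exp (Ω / 2 + f j / 2) * m := by
    intro j hj
    rw [hexpg j]
    have h1 : (∑ i', α i' * Real.exp ((-(f i' - Ω) - C j i') / 2))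
        = Real.exp (Ω / 2 + f j / 2) * SinkAux.Gg C f α j := by
      unfold SinkAux.Gg SinkAux.Ee
      rw [Finset.mul_sum]
      refine Finset.sum_congr rfl fun i' _ => ?_
      rw [hCsym.apply j i']
      rw [show (-(f i' - Ω) - C j i') / 2
        = (Ω / 2 + f j / 2) + (-(f i' + f j + C j i') / 2) by ring, Real.exp_add]
      ring
    rw [h1, hGsupp j hj]
  have hfix : IsSinkhornPotential C α g := by
    rw [SinkAux.sinkhorn_iff C α hα0 hpos]
    intro i
    rw [hexpg i]
    refine Finset.sum_congr rfl fun j _ => ?_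
    rcases (hα0 j).eq_or_lt with h0 | h0
    · rw [← h0]; ring
    · rw [hSj j h0]
      congr 1
      rw [eq_div_iff (by positivity)]
      have hexpΩ : Real.exp Ω = 1 / m := by
        rw [hΩeq, Real.exp_neg, Real.exp_log hmpos, one_div]
      have key2 : Real.exp ((-(f j - Ω) - C i j) / 2) * Real.exp (Ω / 2 + f j / 2)
          = Real.exp Ω * Real.exp (-(C i j) / 2) := by
        rw [← Real.exp_add, ← Real.exp_add]
        congr 1
        ring
      calc Real.exp ((-(f j - Ω) - C i j) / 2) * (Real.exp (Ω / 2 + f j / 2) * m)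
          = Real.exp ((-(f j - Ω) - C i j) / 2) * Real.exp (Ω / 2 + f j / 2) * m := by ring
        _ = Real.exp Ω * Real.exp (-(C i j) / 2) * m := by rw [key2]
        _ = Real.exp (-(C i j) / 2) := by rw [hexpΩ]; field_simp
  have hex2 : ∃ h : Fin d → ℝ, IsSinkhornPotential C α h := ⟨g, hfix⟩
  rw [gradOmega, dif_pos hex2]
  exact SinkAux.sinkhorn_unique C (by omega) α hα0 hsum hex2.choose g hex2.choose_spec hfix

end
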